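/- Let T be a finite group, ℓ ≥ 1, let S be a proper subgroup of T, and let M be a subgroup of the direct power T^ℓ generated by m elements. If T^ℓ = M · S^ℓ (setwise product), then ℓ ≤ |T|^m. -/

import Mathlib

/-- If `T^ℓ = M · S^ℓ` with `S` a proper subgroup of the finite group `T` and `M`
an `m`-generated subgroup of `T^ℓ`, then `ℓ ≤ |T|^m`. -/
theorem stmt6 (T : Type*) [Group T] [Finite T] (ℓ m : ℕ) (hl : 1 ≤ ℓ)
    (S : Subgroup T) (hS : S ≠ ⊤)
    (M : Subgroup (Fin ℓ → T)) (gens : Finset (Fin ℓ → T)) (hgens : gens.card ≤ m)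
    (hM : M = Subgroup.closure (gens : Set (Fin ℓ → T)))
    (hprod : ∀ x : Fin ℓ → T, ∃ y ∈ M,
      ∃ s ∈ Subgroup.pi Set.univ (fun _ : Fin ℓ => S), x = y * s) :
    ℓ ≤ Nat.card T ^ m := by
  -- The evaluation map `Fin ℓ → (gens → T)` is injective.
  have hinj : Function.Injective (fun i : Fin ℓ => fun g : gens => (g : Fin ℓ → T) i) := by
    intro i j hij
    by_contra hne
    -- every element of M agrees on coordinates i and j
    have hdiag : ∀ y ∈ M, y i = y j := by
      intro y hy
      rw [hM] at hy
      refine Subgroup.closure_induction (fun g hg => ?_) rfl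
        (fun a b _ _ ha hb => by simp [Pi.mul_apply, ha, hb])
        (fun a _ ha => by simp [Pi.inv_apply, ha]) hy
      exact congrFun hij ⟨g, hg⟩
    obtain ⟨t, ht⟩ : ∃ t : T, t ∉ S := by
      by_contra h
      push_neg at h
      exact hS ((Subgroup.eq_top_iff' S).2 h)
    -- take x with x i = 1, x j = t
    set x : Fin ℓ → T := fun k => if k = j then t else 1 with hx
    obtain ⟨y, hy, s, hs, hxs⟩ := hprod x
    have hi : x i = y i * s i := congrFun hxs i
    have hj : x j = y j * s j := congrFun hxs j
    have hxi : x i = 1 := by simp [hx, hne]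
    have hxj : x j = t := by simp [hx]
    have hyi : y i = (s i)⁻¹ := by
      rw [hxi] at hi; exact eq_inv_of_mul_eq_one_left hi.symm
    have : t = (s i)⁻¹ * s j := by
      rw [← hxj, hj, ← hdiag y hy, hyi]
    have hsS : ∀ k, s k ∈ S := fun k => hs k (Set.mem_univ k)
    exact ht (this ▸ S.mul_mem (S.inv_mem (hsS i)) (hsS j))
  have h1 : ℓ ≤ Nat.card T ^ gens.card := by
    have := Nat.card_le_card_of_injective _ hinj
    simpa [Nat.card_fun, Nat.card_eq_fintype_card] using this
  refine h1.trans (Nat.pow_le_pow_right ?_ hgens)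
  exact Nat.card_pos
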